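/- Let (Ω, ℱ, P) be a probability space, 𝒢 ⊆ ℱ a sub-σ-algebra, θ a square-integrable real random variable, and ε an independent-of-σ(𝒢, θ) square-integrable real random variable with E[ε]=0 and E[ε²]=v. Set y = θ + ε, μ_mix = E[θ], μ_loc = E[θ|𝒢]. Let B be a 𝒢-measurable weight with 0 ≤ B ≤ 1 − c for a constant c > 0, and let μ̂ be a 𝒢-measurable square-integrable plug-in center with E[(μ̂ − μ_loc)²] ≤ ε_μ. Then E[((1−B)μ̂ + B·y − θ)²] ≤ E[((1−B)μ_mix + B·y − θ)²] − c²·Var(E[θ|𝒢]) + 2·√(ε_μ)·(E[(θ − μ_loc)²])^{1/2} + ε_μ. In particular, if c²·Var(E[θ|𝒢]) > 2·√(ε_μ)·(E[(θ − μ_loc)²])^{1/2} + ε_μ, then the plug-in local shrinkage estimator has strictly smaller Bayes risk than the global shrinkage estimator. -/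

import Mathlib

open MeasureTheory ProbabilityTheory

private lemma cs_integral {Ω : Type*} {mΩ : MeasurableSpace Ω} (P : Measure Ω)
    (f g : Ω → ℝ) (hf : Integrable (fun ω => f ω ^ 2) P) (hg : Integrable (fun ω => g ω ^ 2) P)
    (hfg : Integrable (fun ω => f ω * g ω) P) :
    ∫ ω, f ω * g ω ∂P ≤ Real.sqrt (∫ ω, f ω ^ 2 ∂P) * Real.sqrt (∫ ω, g ω ^ 2 ∂P) := by
  set A := ∫ ω, f ω ^ 2 ∂P with hA
  set G := ∫ ω, g ω ^ 2 ∂P with hG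
  set C := ∫ ω, f ω * g ω ∂P with hC
  have hA0 : 0 ≤ A := integral_nonneg fun ω => sq_nonneg _
  have key : ∀ t : ℝ, 0 ≤ t ^ 2 * A - 2 * t * C + G := by
    intro t
    have h1 : Integrable (fun ω => t ^ 2 * f ω ^ 2) P := hf.const_mul _
    have h2 : Integrable (fun ω => 2 * t * (f ω * g ω)) P := hfg.const_mul _
    have h0 : 0 ≤ ∫ ω, (t * f ω - g ω) ^ 2 ∂P := integral_nonneg fun ω => sq_nonneg _
    have heq : ∀ ω, (t * f ω - g ω) ^ 2
        = t ^ 2 * f ω ^ 2 - 2 * t * (f ω * g ω) + g ω ^ 2 := by intro ω; ring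
    have h12 : Integrable (fun ω => t ^ 2 * f ω ^ 2 - 2 * t * (f ω * g ω)) P := h1.sub h2
    rw [integral_congr_ae (Filter.Eventually.of_forall heq), integral_add h12 hg,
      integral_sub h1 h2, integral_const_mul, integral_const_mul] at h0
    linarith
  rcases eq_or_lt_of_le hA0 with hA' | hA'
  · have hCle : C ≤ 0 := by
      by_contra hCpos
      push_neg at hCpos
      have h := key ((G + 1) / (2 * C))
      rw [← hA'] at h
      have h2 : ((G + 1) / (2 * C)) ^ 2 * 0 - 2 * ((G + 1) / (2 * C)) * C + G = -1 := by
        field_simp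
        ring
      rw [h2] at h
      linarith
    exact hCle.trans (mul_nonneg (Real.sqrt_nonneg _) (Real.sqrt_nonneg _))
  · have h := key (C / A)
    have h2 : (C / A) ^ 2 * A - 2 * (C / A) * C + G = (A * G - C ^ 2) / A := by
      field_simp; ring
    rw [h2] at h
    have hCsq : C ^ 2 ≤ A * G := by
      have h3 := (le_div_iff₀ hA').mp h
      linarith
    calc C ≤ |C| := le_abs_self C
      _ = Real.sqrt (C ^ 2) := (Real.sqrt_sq_eq_abs C).symm
      _ ≤ Real.sqrt (A * G) := Real.sqrt_le_sqrt hCsq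
      _ = Real.sqrt A * Real.sqrt G := Real.sqrt_mul hA0 G

private lemma cs_abs {Ω : Type*} {mΩ : MeasurableSpace Ω} (P : Measure Ω)
    (f g : Ω → ℝ) (hf : Integrable (fun ω => f ω ^ 2) P) (hg : Integrable (fun ω => g ω ^ 2) P)
    (hfg : Integrable (fun ω => f ω * g ω) P) :
    ∫ ω, |f ω * g ω| ∂P ≤ Real.sqrt (∫ ω, f ω ^ 2 ∂P) * Real.sqrt (∫ ω, g ω ^ 2 ∂P) := by
  have h1 : Integrable (fun ω => |f ω| ^ 2) P := by simpa [sq_abs] using hf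
  have h2 : Integrable (fun ω => |g ω| ^ 2) P := by simpa [sq_abs] using hg
  have h3 : Integrable (fun ω => |f ω| * |g ω|) P := by simpa [abs_mul] using hfg.abs
  have h := cs_integral P (fun ω => |f ω|) (fun ω => |g ω|) h1 h2 h3
  simpa [abs_mul, sq_abs] using h

private lemma l2_mul_int {Ω : Type*} {mΩ : MeasurableSpace Ω} {P : Measure Ω}
    {f g : Ω → ℝ} (hf : MemLp f 2 P) (hg : MemLp g 2 P) :
    Integrable (fun ω => f ω * g ω) P := by
  have h : MemLp (f • g) 1 P :=
    MemLp.smul hg hf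
  rw [memLp_one_iff_integrable] at h
  exact h

private lemma bdd_mul_memℒp {Ω : Type*} {mΩ : MeasurableSpace Ω} {P : Measure Ω}
    {g f : Ω → ℝ} (hgm : AEStronglyMeasurable g P) {C : ℝ} (hC : ∀ ω, |g ω| ≤ C)
    (hf : MemLp f 2 P) : MemLp (fun ω => g ω * f ω) 2 P := by
  have hgtop : MemLp g ⊤ P := memLp_top_of_bound hgm C
    (Filter.Eventually.of_forall fun ω => by simpa [Real.norm_eq_abs] using hC ω)
  have h := MemLp.smul (r := 2) hf hgtop
  have heq : (g • f) = fun ω => g ω * f ω := by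
    funext ω; simp [smul_eq_mul, mul_comm]
  rwa [heq] at h

private lemma meas_of_le {Ω : Type*} {m mΩ : MeasurableSpace Ω} {f : Ω → ℝ}
    (hm : m ≤ mΩ) (hf : Measurable[m] f) : Measurable[mΩ] f :=
  fun s hs => hm _ (hf hs)

private lemma bdd_mul_int {Ω : Type*} {mΩ : MeasurableSpace Ω} {P : Measure Ω}
    {g f : Ω → ℝ} (hf : Integrable f P) (hgm : AEStronglyMeasurable g P)
    {C : ℝ} (hC : ∀ ω, |g ω| ≤ C) :
    Integrable (fun ω => g ω * f ω) P := by
  have h := hf.bdd_mul hgm (Filter.Eventually.of_forall fun ω => by simpa [Real.norm_eq_abs] using hC ω)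
  exact h

/-- Theorem 5.2 (plug-in dominance of local EB, quantitative form): with a
`𝒢`-measurable plug-in center `μ̂` satisfying `E[(μ̂ - μ_loc)²] ≤ ε_μ`, the
plug-in local risk is at most the global risk minus the oracle gap
`c²·Var(E[θ|𝒢])` plus the estimation penalty
`2·√ε_μ·(E[(θ - μ_loc)²])^{1/2} + ε_μ`; strict dominance follows when the
oracle gap exceeds the penalty. -/
theorem stmt_10
    {Ω : Type*} {mΩ : MeasurableSpace Ω} (P : Measure Ω) [IsProbabilityMeasure P]
    (m : MeasurableSpace Ω) (hm : m ≤ mΩ)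
    (θ ε : Ω → ℝ) (v : ℝ)
    (hθ : MemLp θ 2 P) (hε : MemLp ε 2 P)
    (hεmean : ∫ ω, ε ω ∂P = 0) (hεsq : ∫ ω, (ε ω) ^ 2 ∂P = v)
    (hindep : Indep (m ⊔ MeasurableSpace.comap θ Real.measurableSpace)
        (MeasurableSpace.comap ε Real.measurableSpace) P)
    (y : Ω → ℝ) (hy : y = fun ω => θ ω + ε ω)
    (B : Ω → ℝ) (hBmeas : Measurable[m] B)
    (c : ℝ) (hc : 0 < c) (hB : ∀ ω, 0 ≤ B ω ∧ B ω ≤ 1 - c)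
    (μhat : Ω → ℝ) (hμhatMeas : Measurable[m] μhat) (hμhat : MemLp μhat 2 P)
    (εμ : ℝ) (hεμ : ∫ ω, (μhat ω - (P[θ|m]) ω) ^ 2 ∂P ≤ εμ) :
    (∫ ω, ((1 - B ω) * μhat ω + B ω * y ω - θ ω) ^ 2 ∂P
      ≤ (∫ ω, ((1 - B ω) * (∫ ω', θ ω' ∂P) + B ω * y ω - θ ω) ^ 2 ∂P)
        - c ^ 2 * (∫ ω, ((P[θ|m]) ω - ∫ ω', θ ω' ∂P) ^ 2 ∂P)
        + 2 * Real.sqrt εμ * Real.sqrt (∫ ω, (θ ω - (P[θ|m]) ω) ^ 2 ∂P) + εμ)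
    ∧ (c ^ 2 * (∫ ω, ((P[θ|m]) ω - ∫ ω', θ ω' ∂P) ^ 2 ∂P)
        > 2 * Real.sqrt εμ * Real.sqrt (∫ ω, (θ ω - (P[θ|m]) ω) ^ 2 ∂P) + εμ →
      (∫ ω, ((1 - B ω) * μhat ω + B ω * y ω - θ ω) ^ 2 ∂P)
        < ∫ ω, ((1 - B ω) * (∫ ω', θ ω' ∂P) + B ω * y ω - θ ω) ^ 2 ∂P) := by
  subst hy
  have hθint : Integrable θ P := hθ.integrable one_le_two
  set K := ∫ ω', θ ω' ∂P with hK
  set μl : Ω → ℝ := P[θ|m] with hμldef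
  -- μl ∈ L²
  have hμl2 : MemLp μl 2 P := by
    have hLp : MemLp (condExpL2 ℝ ℝ hm (hθ.toLp θ) : Ω → ℝ) 2 P :=
      Lp.memLp (condExpL2 ℝ ℝ hm (hθ.toLp θ) : Lp ℝ 2 P)
    have hae : (condExpL2 ℝ ℝ hm (hθ.toLp θ) : Ω → ℝ) =ᵐ[P] μl := by
      refine ae_eq_condExp_of_forall_setIntegral_eq hm hθint
        (fun s hs hμs => integrableOn_condExpL2_of_measure_ne_top hm hμs.ne _)
        (fun s hs hμs => ?_) (aestronglyMeasurable_condExpL2 hm _)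
      rw [integral_condExpL2_eq hm (hθ.toLp θ) hs hμs.ne]
      exact integral_congr_ae (ae_restrict_of_ae (MemLp.coeFn_toLp hθ))
    exact hLp.ae_eq hae
  -- basic bounds on B
  have hBl : ∀ ω, c ≤ 1 - B ω := fun ω => by linarith [(hB ω).2]
  have hBu : ∀ ω, 1 - B ω ≤ 1 := fun ω => by linarith [(hB ω).1]
  have hB0 : ∀ ω, 0 ≤ 1 - B ω := fun ω => le_trans hc.le (hBl ω)
  have hBsq : ∀ ω, (1 - B ω) ^ 2 ≤ 1 := fun ω => by
    nlinarith [hB0 ω, hBu ω]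
  have hBsq0 : ∀ ω, 0 ≤ (1 - B ω) ^ 2 := fun ω => sq_nonneg _
  -- measurability
  have hBm : Measurable[mΩ] B := meas_of_le hm hBmeas
  have hμhatm : Measurable[mΩ] μhat := meas_of_le hm hμhatMeas
  have hμlsm : StronglyMeasurable[m] μl := stronglyMeasurable_condExp
  have hμlm : AEStronglyMeasurable[mΩ] μl P := (hμlsm.mono hm).aestronglyMeasurable
  have hεam : AEStronglyMeasurable[mΩ] ε P := hε.aestronglyMeasurable
  -- L² memberships
  have ha2 : MemLp (fun ω => μhat ω - μl ω) 2 P := hμhat.sub hμl2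
  have hb2 : MemLp (fun ω => μl ω - K) 2 P := hμl2.sub (memLp_const K)
  have hd2 : MemLp (fun ω => θ ω - μl ω) 2 P := hθ.sub hμl2
  -- bounded multiplier facts
  have h1B2m : AEStronglyMeasurable[mΩ] (fun ω => (1 - B ω) ^ 2) P :=
    ((measurable_const.sub hBm).pow_const 2).aestronglyMeasurable
  have h1B2b : ∀ ω, |(1 - B ω) ^ 2| ≤ 1 := fun ω => by
    rw [abs_of_nonneg (hBsq0 ω)]; exact hBsq ω
  have h1B1Bm : AEStronglyMeasurable[mΩ] (fun ω => (1 - B ω) * (1 - B ω)) P :=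
    ((measurable_const.sub hBm).mul (measurable_const.sub hBm)).aestronglyMeasurable
  have h1B1Bb : ∀ ω, |(1 - B ω) * (1 - B ω)| ≤ 1 := fun ω => by
    rw [abs_of_nonneg (mul_nonneg (hB0 ω) (hB0 ω))]
    nlinarith [hB0 ω, hBu ω]
  -- integrable products
  have hda_int : Integrable (fun ω => (θ ω - μl ω) * (μhat ω - μl ω)) P := l2_mul_int hd2 ha2
  have i1 : Integrable (fun ω => (1 - B ω) ^ 2 * ((θ ω - μl ω) * (μhat ω - μl ω))) P :=
    bdd_mul_int hda_int h1B2m h1B2b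
  have ha_sq : Integrable (fun ω => (μhat ω - μl ω) ^ 2) P := ha2.integrable_sq
  have hb_sq : Integrable (fun ω => (μl ω - K) ^ 2) P := hb2.integrable_sq
  have hd_sq : Integrable (fun ω => (θ ω - μl ω) ^ 2) P := hd2.integrable_sq
  have i5 : Integrable (fun ω => (1 - B ω) ^ 2 * (μhat ω - μl ω) ^ 2) P :=
    bdd_mul_int ha_sq h1B2m h1B2b
  have i6 : Integrable (fun ω => (1 - B ω) ^ 2 * (μl ω - K) ^ 2) P :=
    bdd_mul_int hb_sq h1B2m h1B2b
  -- t2 and t4 : cross terms with ε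
  have hF2mem : MemLp (fun ω => B ω * (1 - B ω) * (μhat ω - μl ω)) 2 P := by
    have hBb : ∀ ω, |B ω * (1 - B ω)| ≤ 1 := fun ω => by
      rw [abs_of_nonneg (mul_nonneg (hB ω).1 (hB0 ω))]
      nlinarith [(hB ω).1, (hB ω).2, hB0 ω, hBu ω]
    have := bdd_mul_memℒp (g := fun ω => B ω * (1 - B ω))
      ((hBm.mul (measurable_const.sub hBm)).aestronglyMeasurable) hBb ha2
    exact this
  have hF4mem : MemLp (fun ω => B ω * (1 - B ω) * (μl ω - K)) 2 P := by
    have hBb : ∀ ω, |B ω * (1 - B ω)| ≤ 1 := fun ω => by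
      rw [abs_of_nonneg (mul_nonneg (hB ω).1 (hB0 ω))]
      nlinarith [(hB ω).1, (hB ω).2, hB0 ω, hBu ω]
    exact bdd_mul_memℒp (g := fun ω => B ω * (1 - B ω))
      ((hBm.mul (measurable_const.sub hBm)).aestronglyMeasurable) hBb hb2
  have i2 : Integrable (fun ω => B ω * (1 - B ω) * (μhat ω - μl ω) * ε ω) P := by
    have := l2_mul_int hF2mem hε
    exact this
  have i4 : Integrable (fun ω => B ω * (1 - B ω) * (μl ω - K) * ε ω) P := by
    have := l2_mul_int hF4mem hε
    exact this
  have hμlMm : Measurable[m] μl := hμlsm.measurable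
  -- independence of m-measurable funcs and ε
  have hindep_of : ∀ (F : Ω → ℝ), Measurable[m] F → IndepFun F ε P := by
    intro F hF
    rw [IndepFun_iff_Indep]
    exact indep_of_indep_of_le_left hindep ((Measurable.comap_le hF).trans le_sup_left)
  have hJ2 : ∫ ω, B ω * (1 - B ω) * (μhat ω - μl ω) * ε ω ∂P = 0 := by
    have hFm : Measurable[m] (fun ω => B ω * (1 - B ω) * (μhat ω - μl ω)) :=
      (hBmeas.mul (measurable_const.sub hBmeas)).mul (hμhatMeas.sub hμlMm)
    rw [(hindep_of _ hFm).integral_fun_mul_eq_mul_integral ((meas_of_le hm hFm).aestronglyMeasurable) hεam,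
      hεmean, mul_zero]
  have hJ4 : ∫ ω, B ω * (1 - B ω) * (μl ω - K) * ε ω ∂P = 0 := by
    have hFm : Measurable[m] (fun ω => B ω * (1 - B ω) * (μl ω - K)) :=
      (hBmeas.mul (measurable_const.sub hBmeas)).mul (hμlMm.sub measurable_const)
    rw [(hindep_of _ hFm).integral_fun_mul_eq_mul_integral ((meas_of_le hm hFm).aestronglyMeasurable) hεam,
      hεmean, mul_zero]
  -- t3 : orthogonality via conditional expectation
  have hd_int : Integrable (fun ω => θ ω - μl ω) P := hθint.sub integrable_condExp
  have hG3sm : StronglyMeasurable[m] (fun ω => (1 - B ω) * (1 - B ω) * (μl ω - K)) :=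
    ((stronglyMeasurable_const.sub hBmeas.stronglyMeasurable).mul
      (stronglyMeasurable_const.sub hBmeas.stronglyMeasurable)).mul
      (hμlsm.sub stronglyMeasurable_const)
  have i3 : Integrable (fun ω => (1 - B ω) * (1 - B ω) * (μl ω - K) * (θ ω - μl ω)) P := by
    have hbd : Integrable (fun ω => (μl ω - K) * (θ ω - μl ω)) P := l2_mul_int hb2 hd2
    have h := bdd_mul_int hbd h1B1Bm h1B1Bb
    exact h.congr (Filter.Eventually.of_forall fun ω => by ring)
  have hJ3 : ∫ ω, (1 - B ω) * (1 - B ω) * (μl ω - K) * (θ ω - μl ω) ∂P = 0 := by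
    have hcond : P[(fun ω => (1 - B ω) * (1 - B ω) * (μl ω - K)) * (fun ω => θ ω - μl ω)|m]
        =ᵐ[P] (fun ω => (1 - B ω) * (1 - B ω) * (μl ω - K)) * P[fun ω => θ ω - μl ω|m] :=
      condExp_mul_of_stronglyMeasurable_left hG3sm (by
        exact i3.congr (Filter.Eventually.of_forall fun ω => rfl)) hd_int
    have hd0 : P[fun ω => θ ω - μl ω|m] =ᵐ[P] 0 := by
      have hsub : P[fun ω => θ ω - μl ω|m] =ᵐ[P] P[θ|m] - P[μl|m] :=
        condExp_sub hθint integrable_condExp m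
      have hself : P[μl|m] = μl := condExp_of_stronglyMeasurable hm hμlsm integrable_condExp
      refine hsub.trans ?_
      rw [hself, hμldef]
      filter_upwards with ω
      simp
    have h0 : P[(fun ω => (1 - B ω) * (1 - B ω) * (μl ω - K)) * (fun ω => θ ω - μl ω)|m]
        =ᵐ[P] 0 := by
      refine hcond.trans ?_
      filter_upwards [hd0] with ω hω
      simp only [Pi.mul_apply, Pi.zero_apply] at hω ⊢
      rw [hω, mul_zero]
    calc ∫ ω, (1 - B ω) * (1 - B ω) * (μl ω - K) * (θ ω - μl ω) ∂P
        = ∫ ω, ((fun ω => (1 - B ω) * (1 - B ω) * (μl ω - K)) * (fun ω => θ ω - μl ω)) ω ∂P := by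
          exact integral_congr_ae (Filter.Eventually.of_forall fun ω => rfl)
      _ = ∫ ω, (P[(fun ω => (1 - B ω) * (1 - B ω) * (μl ω - K)) * (fun ω => θ ω - μl ω)|m]) ω ∂P :=
          (integral_condExp hm).symm
      _ = ∫ ω, (0 : Ω → ℝ) ω ∂P := integral_congr_ae h0
      _ = 0 := by simp
  -- integrability of global risk integrand
  have hinner : MemLp (fun ω => (1 - B ω) * K + B ω * (θ ω + ε ω) - θ ω) 2 P := by
    have h1 : MemLp (fun ω => (1 - B ω) * K) 2 P :=
      bdd_mul_memℒp ((measurable_const.sub hBm).aestronglyMeasurable)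
        (fun ω => by rw [abs_of_nonneg (hB0 ω)]; exact hBu ω) (memLp_const K)
    have h2 : MemLp (fun ω => B ω * (θ ω + ε ω)) 2 P :=
      bdd_mul_memℒp (C := 1) (hBm.aestronglyMeasurable)
        (fun ω => by
          rw [abs_of_nonneg (hB ω).1]
          linarith [(hB ω).2, hc.le]) (hθ.add hε)
    exact (h1.add h2).sub hθ
  have iR : Integrable (fun ω => ((1 - B ω) * K + B ω * (θ ω + ε ω) - θ ω) ^ 2) P :=
    hinner.integrable_sq
  -- the pointwise algebraic identity
  have hptid : ∀ ω, ((1 - B ω) * μhat ω + B ω * (θ ω + ε ω) - θ ω) ^ 2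
      = ((1 - B ω) * K + B ω * (θ ω + ε ω) - θ ω) ^ 2
        - 2 * ((1 - B ω) ^ 2 * ((θ ω - μl ω) * (μhat ω - μl ω)))
        + 2 * (B ω * (1 - B ω) * (μhat ω - μl ω) * ε ω)
        - 2 * ((1 - B ω) * (1 - B ω) * (μl ω - K) * (θ ω - μl ω))
        + 2 * (B ω * (1 - B ω) * (μl ω - K) * ε ω)
        + (1 - B ω) ^ 2 * (μhat ω - μl ω) ^ 2
        - (1 - B ω) ^ 2 * (μl ω - K) ^ 2 := by
    intro ω; ring
  -- split the integral
  have i1' : Integrable (fun ω => 2 * ((1 - B ω) ^ 2 * ((θ ω - μl ω) * (μhat ω - μl ω)))) P :=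
    i1.const_mul 2
  have i2' : Integrable (fun ω => 2 * (B ω * (1 - B ω) * (μhat ω - μl ω) * ε ω)) P :=
    i2.const_mul 2
  have i3' : Integrable (fun ω => 2 * ((1 - B ω) * (1 - B ω) * (μl ω - K) * (θ ω - μl ω))) P :=
    i3.const_mul 2
  have i4' : Integrable (fun ω => 2 * (B ω * (1 - B ω) * (μl ω - K) * ε ω)) P :=
    i4.const_mul 2
  have iA : Integrable (fun ω => ((1 - B ω) * K + B ω * (θ ω + ε ω) - θ ω) ^ 2
      - 2 * ((1 - B ω) ^ 2 * ((θ ω - μl ω) * (μhat ω - μl ω)))) P := iR.sub i1'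
  have iB : Integrable (fun ω => ((1 - B ω) * K + B ω * (θ ω + ε ω) - θ ω) ^ 2
      - 2 * ((1 - B ω) ^ 2 * ((θ ω - μl ω) * (μhat ω - μl ω)))
      + 2 * (B ω * (1 - B ω) * (μhat ω - μl ω) * ε ω)) P := iA.add i2'
  have iC : Integrable (fun ω => ((1 - B ω) * K + B ω * (θ ω + ε ω) - θ ω) ^ 2
      - 2 * ((1 - B ω) ^ 2 * ((θ ω - μl ω) * (μhat ω - μl ω)))
      + 2 * (B ω * (1 - B ω) * (μhat ω - μl ω) * ε ω)
      - 2 * ((1 - B ω) * (1 - B ω) * (μl ω - K) * (θ ω - μl ω))) P := iB.sub i3'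
  have iD : Integrable (fun ω => ((1 - B ω) * K + B ω * (θ ω + ε ω) - θ ω) ^ 2
      - 2 * ((1 - B ω) ^ 2 * ((θ ω - μl ω) * (μhat ω - μl ω)))
      + 2 * (B ω * (1 - B ω) * (μhat ω - μl ω) * ε ω)
      - 2 * ((1 - B ω) * (1 - B ω) * (μl ω - K) * (θ ω - μl ω))
      + 2 * (B ω * (1 - B ω) * (μl ω - K) * ε ω)) P := iC.add i4'
  have iE : Integrable (fun ω => ((1 - B ω) * K + B ω * (θ ω + ε ω) - θ ω) ^ 2
      - 2 * ((1 - B ω) ^ 2 * ((θ ω - μl ω) * (μhat ω - μl ω)))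
      + 2 * (B ω * (1 - B ω) * (μhat ω - μl ω) * ε ω)
      - 2 * ((1 - B ω) * (1 - B ω) * (μl ω - K) * (θ ω - μl ω))
      + 2 * (B ω * (1 - B ω) * (μl ω - K) * ε ω)
      + (1 - B ω) ^ 2 * (μhat ω - μl ω) ^ 2) P := iD.add i5
  have hsplit : ∫ ω, ((1 - B ω) * μhat ω + B ω * (θ ω + ε ω) - θ ω) ^ 2 ∂P
      = (∫ ω, ((1 - B ω) * K + B ω * (θ ω + ε ω) - θ ω) ^ 2 ∂P)
        - 2 * ∫ ω, (1 - B ω) ^ 2 * ((θ ω - μl ω) * (μhat ω - μl ω)) ∂P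
        + 2 * ∫ ω, B ω * (1 - B ω) * (μhat ω - μl ω) * ε ω ∂P
        - 2 * ∫ ω, (1 - B ω) * (1 - B ω) * (μl ω - K) * (θ ω - μl ω) ∂P
        + 2 * ∫ ω, B ω * (1 - B ω) * (μl ω - K) * ε ω ∂P
        + ∫ ω, (1 - B ω) ^ 2 * (μhat ω - μl ω) ^ 2 ∂P
        - ∫ ω, (1 - B ω) ^ 2 * (μl ω - K) ^ 2 ∂P := by
    rw [integral_congr_ae (Filter.Eventually.of_forall hptid)]
    rw [integral_sub iE i6, integral_add iD i5, integral_add iC i4', integral_sub iB i3',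
      integral_add iA i2', integral_sub iR i1', integral_const_mul, integral_const_mul,
      integral_const_mul, integral_const_mul]
  -- bound the cross term t1
  have hT : 0 ≤ ∫ ω, (θ ω - μl ω) ^ 2 ∂P := integral_nonneg fun ω => sq_nonneg _
  have hJ1 : -∫ ω, (1 - B ω) ^ 2 * ((θ ω - μl ω) * (μhat ω - μl ω)) ∂P
      ≤ Real.sqrt εμ * Real.sqrt (∫ ω, (θ ω - μl ω) ^ 2 ∂P) := by
    have habs : Integrable (fun ω => |(θ ω - μl ω) * (μhat ω - μl ω)|) P := hda_int.abs
    have hmono : ∫ ω, -((1 - B ω) ^ 2 * ((θ ω - μl ω) * (μhat ω - μl ω))) ∂P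
        ≤ ∫ ω, |(θ ω - μl ω) * (μhat ω - μl ω)| ∂P := by
      refine integral_mono i1.neg habs fun ω => ?_
      have h1 := hBsq ω
      have h2 := hBsq0 ω
      set x := (θ ω - μl ω) * (μhat ω - μl ω)
      calc -((1 - B ω) ^ 2 * x) ≤ |(1 - B ω) ^ 2 * x| := neg_le_abs _
        _ = (1 - B ω) ^ 2 * |x| := by rw [abs_mul, abs_of_nonneg h2]
        _ ≤ |x| := by nlinarith [abs_nonneg x]
    have hcs := cs_abs P (fun ω => θ ω - μl ω) (fun ω => μhat ω - μl ω) hd_sq ha_sq hda_int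
    have hsqa : Real.sqrt (∫ ω, (μhat ω - μl ω) ^ 2 ∂P) ≤ Real.sqrt εμ :=
      Real.sqrt_le_sqrt hεμ
    have hneg : -∫ ω, (1 - B ω) ^ 2 * ((θ ω - μl ω) * (μhat ω - μl ω)) ∂P
        = ∫ ω, -((1 - B ω) ^ 2 * ((θ ω - μl ω) * (μhat ω - μl ω))) ∂P := by
      rw [integral_neg]
    rw [hneg]
    calc ∫ ω, -((1 - B ω) ^ 2 * ((θ ω - μl ω) * (μhat ω - μl ω))) ∂P
        ≤ ∫ ω, |(θ ω - μl ω) * (μhat ω - μl ω)| ∂P := hmono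
      _ ≤ Real.sqrt (∫ ω, (θ ω - μl ω) ^ 2 ∂P)
          * Real.sqrt (∫ ω, (μhat ω - μl ω) ^ 2 ∂P) := hcs
      _ ≤ Real.sqrt (∫ ω, (θ ω - μl ω) ^ 2 ∂P) * Real.sqrt εμ :=
          mul_le_mul_of_nonneg_left hsqa (Real.sqrt_nonneg _)
      _ = Real.sqrt εμ * Real.sqrt (∫ ω, (θ ω - μl ω) ^ 2 ∂P) := mul_comm _ _
  -- bound t5
  have hJ5 : ∫ ω, (1 - B ω) ^ 2 * (μhat ω - μl ω) ^ 2 ∂P ≤ εμ := by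
    refine le_trans (integral_mono i5 ha_sq fun ω => ?_) hεμ
    nlinarith [sq_nonneg (μhat ω - μl ω), hBsq ω, hBsq0 ω]
  -- bound t6
  have hJ6 : c ^ 2 * ∫ ω, (μl ω - K) ^ 2 ∂P ≤ ∫ ω, (1 - B ω) ^ 2 * (μl ω - K) ^ 2 ∂P := by
    have h := integral_mono (hb_sq.const_mul (c ^ 2)) i6 fun ω => ?_
    · rwa [integral_const_mul] at h
    · have h1 : c ^ 2 ≤ (1 - B ω) ^ 2 := by nlinarith [hBl ω, hc.le]
      nlinarith [sq_nonneg (μl ω - K)]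
  have hmain : ∫ ω, ((1 - B ω) * μhat ω + B ω * (θ ω + ε ω) - θ ω) ^ 2 ∂P
      ≤ (∫ ω, ((1 - B ω) * K + B ω * (θ ω + ε ω) - θ ω) ^ 2 ∂P)
        - c ^ 2 * (∫ ω, (μl ω - K) ^ 2 ∂P)
        + 2 * Real.sqrt εμ * Real.sqrt (∫ ω, (θ ω - μl ω) ^ 2 ∂P) + εμ := by
    rw [hsplit, hJ2, hJ3, hJ4]
    linarith [hJ1, hJ5, hJ6]
  refine ⟨hmain, fun hgt => ?_⟩
  calc ∫ ω, ((1 - B ω) * μhat ω + B ω * (θ ω + ε ω) - θ ω) ^ 2 ∂P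
      ≤ (∫ ω, ((1 - B ω) * K + B ω * (θ ω + ε ω) - θ ω) ^ 2 ∂P)
        - c ^ 2 * (∫ ω, (μl ω - K) ^ 2 ∂P)
        + 2 * Real.sqrt εμ * Real.sqrt (∫ ω, (θ ω - μl ω) ^ 2 ∂P) + εμ := hmain
    _ < ∫ ω, ((1 - B ω) * K + B ω * (θ ω + ε ω) - θ ω) ^ 2 ∂P := by linarith
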